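/- arXiv:2406.02526 — 4 statements merged into one kernel-verified Lean document; each statement's English description precedes it below -/
import Mathlib

section
/- Let X, X', Y, Y' be topological spaces and let k : X' → X and h : Y → Y' be continuous maps. If continuous maps a, b : X → Y satisfy a ∼_r b, then a∘k ∼_r b∘k (as maps X' → Y) and h∘a ∼_r h∘b (as maps X → Y'). -/
/-- The restriction homomorphism `⟨Y^X⟩ → ⟨Y^T⟩`, `⟨a⟩ ↦ ⟨a|_T⟩`, on free abelian
groups on continuous maps. -/
noncomputable def restrictEns {X Y : Type*} [TopologicalSpace X] [TopologicalSpace Y]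
    (T : Set X) : (C(X, Y) →₀ ℤ) →+ (C(T, Y) →₀ ℤ) :=
  Finsupp.mapDomain.addMonoidHom fun a => a.restrict T

/-- `A ∈ ⟨Y^X⟩^{(s)}`: the restriction of `A` to every finite subset with fewer than `s`
points vanishes.  (So `⟨Y^X⟩^{(r+1)}` is `inFilt (r+1)`.) -/
def inFilt {X Y : Type*} [TopologicalSpace X] [TopologicalSpace Y]
    (s : ℕ) (A : C(X, Y) →₀ ℤ) : Prop :=
  ∀ T : Set X, T.Finite → T.ncard < s → restrictEns T A = 0

/-- `a ∼_r b` : some integral combination `A` of maps homotopic to `a`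
satisfies `A ≡_r ⟨b⟩`, i.e. `A - ⟨b⟩ ∈ ⟨Y^X⟩^{(r+1)}`. -/
def similar {X Y : Type*} [TopologicalSpace X] [TopologicalSpace Y]
    (r : ℕ) (a b : C(X, Y)) : Prop :=
  ∃ A : C(X, Y) →₀ ℤ, (∀ c ∈ A.support, c.Homotopic a) ∧
    inFilt (r + 1) (A - Finsupp.single b 1)

section aux
variable {X X' Y Y' : Type*} [TopologicalSpace X] [TopologicalSpace X']
    [TopologicalSpace Y] [TopologicalSpace Y']

/-- The restriction of `k` to a map `T → k '' T`. -/
noncomputable def kRes (k : C(X', X)) (T : Set X') : C(T, (k '' T : Set X)) :=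
  ⟨fun x => ⟨k x, ⟨x, x.2, rfl⟩⟩, (k.continuous.comp continuous_subtype_val).subtype_mk _⟩

lemma precomp_restrict (k : C(X', X)) (T : Set X') (B : C(X, Y) →₀ ℤ) :
    restrictEns T (Finsupp.mapDomain (fun c : C(X, Y) => c.comp k) B)
      = Finsupp.mapDomain (fun c : C((k '' T : Set X), Y) => c.comp (kRes k T))
          (restrictEns (k '' T) B) := by
  show Finsupp.mapDomain _ (Finsupp.mapDomain _ B) = Finsupp.mapDomain _ (Finsupp.mapDomain _ B)
  rw [← Finsupp.mapDomain_comp, ← Finsupp.mapDomain_comp]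
  congr 1

lemma postcomp_restrict (h : C(Y, Y')) (T : Set X) (B : C(X, Y) →₀ ℤ) :
    restrictEns T (Finsupp.mapDomain (fun c : C(X, Y) => h.comp c) B)
      = Finsupp.mapDomain (fun c : C(T, Y) => h.comp c) (restrictEns T B) := by
  show Finsupp.mapDomain _ (Finsupp.mapDomain _ B) = Finsupp.mapDomain _ (Finsupp.mapDomain _ B)
  rw [← Finsupp.mapDomain_comp, ← Finsupp.mapDomain_comp]
  congr 1

end aux

theorem stmt1 {X X' Y Y' : Type*} [TopologicalSpace X] [TopologicalSpace X']
    [TopologicalSpace Y] [TopologicalSpace Y']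
    (k : C(X', X)) (h : C(Y, Y')) (r : ℕ) (a b : C(X, Y))
    (hab : similar r a b) :
    similar r (a.comp k) (b.comp k) ∧ similar r (h.comp a) (h.comp b) := by
  classical
  obtain ⟨A, hA, hfilt⟩ := hab
  constructor
  · refine ⟨Finsupp.mapDomain (fun c : C(X, Y) => c.comp k) A, ?_, ?_⟩
    · intro c hc
      obtain ⟨d, hd, rfl⟩ := Finset.mem_image.mp (Finsupp.mapDomain_support hc)
      exact ContinuousMap.Homotopic.comp (hA d hd) (ContinuousMap.Homotopic.refl k)
    · intro T hT hcard
      have : Finsupp.mapDomain (fun c : C(X, Y) => c.comp k) A - Finsupp.single (b.comp k) 1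
          = Finsupp.mapDomain (fun c : C(X, Y) => c.comp k) (A - Finsupp.single b 1) := by
        have h2 := (Finsupp.mapDomain.addMonoidHom (fun c : C(X, Y) => c.comp k)).map_sub
          A (Finsupp.single b 1)
        simp only [Finsupp.mapDomain.addMonoidHom_apply, Finsupp.mapDomain_single] at h2
        rw [h2]
      rw [this, precomp_restrict,
        hfilt (k '' T) (hT.image k) (lt_of_le_of_lt (Set.ncard_image_le hT) hcard),
        Finsupp.mapDomain_zero]
  · refine ⟨Finsupp.mapDomain (fun c : C(X, Y) => h.comp c) A, ?_, ?_⟩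
    · intro c hc
      obtain ⟨d, hd, rfl⟩ := Finset.mem_image.mp (Finsupp.mapDomain_support hc)
      exact ContinuousMap.Homotopic.comp (ContinuousMap.Homotopic.refl h) (hA d hd)
    · intro T hT hcard
      have : Finsupp.mapDomain (fun c : C(X, Y) => h.comp c) A - Finsupp.single (h.comp b) 1
          = Finsupp.mapDomain (fun c : C(X, Y) => h.comp c) (A - Finsupp.single b 1) := by
        have h2 := (Finsupp.mapDomain.addMonoidHom (fun c : C(X, Y) => h.comp c)).map_sub
          A (Finsupp.single b 1)
        simp only [Finsupp.mapDomain.addMonoidHom_apply, Finsupp.mapDomain_single] at h2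
        rw [h2]
      rw [this, postcomp_restrict, hfilt T hT hcard, Finsupp.mapDomain_zero]
end

section
/- Let X₁, X₂, Y be pointed topological spaces, let p, q ≥ 0, and let A = Σ_i u_i⟨a_i⟩ ∈ ⟨Y^{X₁}⟩^{(p)} and B = Σ_j v_j⟨b_j⟩ ∈ ⟨Y^{X₂}⟩^{(q)}. Then the join Σ_{i,j} u_i v_j ⟨a_i ∇ b_j⟩ lies in ⟨Y^{X₁∨X₂}⟩^{(p+q)}. -/
/-- The wedge `X₁ ∨ X₂` of two pointed spaces: the quotient of `X₁ ⊔ X₂`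
identifying the two basepoints. -/
def Wedge (X₁ X₂ : Type*) [TopologicalSpace X₁] [TopologicalSpace X₂] (p₁ : X₁) (p₂ : X₂) :=
  Quot fun a b : X₁ ⊕ X₂ => a = Sum.inl p₁ ∧ b = Sum.inr p₂

instance (X₁ X₂ : Type*) [TopologicalSpace X₁] [TopologicalSpace X₂] (p₁ : X₁) (p₂ : X₂) :
    TopologicalSpace (Wedge X₁ X₂ p₁ p₂) :=
  inferInstanceAs (TopologicalSpace (Quot _))

namespace Wedge

variable (X₁ X₂ : Type*) [TopologicalSpace X₁] [TopologicalSpace X₂] (p₁ : X₁) (p₂ : X₂)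

/-- The basepoint of the wedge. -/
def pt : Wedge X₁ X₂ p₁ p₂ := Quot.mk _ (Sum.inl p₁)

/-- The inclusion of the first summand. -/
def inl : C(X₁, Wedge X₁ X₂ p₁ p₂) :=
  ⟨fun x => Quot.mk _ (Sum.inl x), continuous_quot_mk.comp continuous_inl⟩

/-- The inclusion of the second summand. -/
def inr : C(X₂, Wedge X₁ X₂ p₁ p₂) :=
  ⟨fun x => Quot.mk _ (Sum.inr x), continuous_quot_mk.comp continuous_inr⟩

theorem inl_pt : inl X₁ X₂ p₁ p₂ p₁ = pt X₁ X₂ p₁ p₂ := rfl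

theorem inr_pt : inr X₁ X₂ p₁ p₂ p₂ = pt X₁ X₂ p₁ p₂ := (Quot.sound ⟨rfl, rfl⟩).symm

variable {X₁ X₂ p₁ p₂} {Y : Type*} [TopologicalSpace Y]

/-- `a ∇ b` : the map `X₁ ∨ X₂ → Y` restricting to `a` and `b` on the two summands. -/
def elim (a : C(X₁, Y)) (b : C(X₂, Y)) (hab : a p₁ = b p₂) : C(Wedge X₁ X₂ p₁ p₂, Y) :=
  ⟨Quot.lift (Sum.elim a b)
      (by rintro s t ⟨hs, ht⟩; subst hs; subst ht; simpa using hab),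
    continuous_quot_lift _ (a.continuous.sumElim b.continuous)⟩

end Wedge

/-- Basepoint-preserving continuous maps. -/
def PtdMap (X Y : Type*) [TopologicalSpace X] [TopologicalSpace Y] (x₀ : X) (y₀ : Y) :=
  {f : C(X, Y) // f x₀ = y₀}

/-- The restriction homomorphism `⟨Y^X⟩ → ⟨Y^T⟩` on the free abelian group on
basepoint-preserving maps, `⟨a⟩ ↦ ⟨a|_T⟩` (landing in the free abelian group on
all continuous maps `T → Y`). -/
noncomputable def restrictEnsP {X Y : Type*} [TopologicalSpace X] [TopologicalSpace Y]
    {x₀ : X} {y₀ : Y} (T : Set X) : (PtdMap X Y x₀ y₀ →₀ ℤ) →+ (C(T, Y) →₀ ℤ) :=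
  Finsupp.mapDomain.addMonoidHom fun a => a.1.restrict T

/-- `A ∈ ⟨Y^X⟩^{(s)}`: the restriction of `A` to every finite subset with fewer than `s`
points vanishes (so membership in `⟨Y^X⟩^{(s)}` means vanishing on subsets with at most
`s - 1` points, and `⟨Y^X⟩^{(0)}` is everything). -/
def inFiltP {X Y : Type*} [TopologicalSpace X] [TopologicalSpace Y] {x₀ : X} {y₀ : Y}
    (s : ℕ) (A : PtdMap X Y x₀ y₀ →₀ ℤ) : Prop :=
  ∀ T : Set X, T.Finite → T.ncard < s → restrictEnsP T A = 0

/-- `a ∇ b` for basepoint-preserving maps, as a basepoint-preserving map on the wedge. -/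
def wedgeElimP {X₁ X₂ Y : Type*} [TopologicalSpace X₁] [TopologicalSpace X₂]
    [TopologicalSpace Y] {p₁ : X₁} {p₂ : X₂} {y₀ : Y}
    (a : PtdMap X₁ Y p₁ y₀) (b : PtdMap X₂ Y p₂ y₀) :
    PtdMap (Wedge X₁ X₂ p₁ p₂) Y (Wedge.pt X₁ X₂ p₁ p₂) y₀ :=
  ⟨Wedge.elim a.1 b.1 (a.2.trans b.2.symm), a.2⟩

/-- The join `Σ_{i,j} u_i v_j ⟨a_i ∇ b_j⟩` of two ensembles
`A = Σ_i u_i ⟨a_i⟩` and `B = Σ_j v_j ⟨b_j⟩`. -/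
noncomputable def joinEns {X₁ X₂ Y : Type*} [TopologicalSpace X₁] [TopologicalSpace X₂]
    [TopologicalSpace Y] {p₁ : X₁} {p₂ : X₂} {y₀ : Y}
    (A : PtdMap X₁ Y p₁ y₀ →₀ ℤ) (B : PtdMap X₂ Y p₂ y₀ →₀ ℤ) :
    (PtdMap (Wedge X₁ X₂ p₁ p₂) Y (Wedge.pt X₁ X₂ p₁ p₂) y₀ →₀ ℤ) :=
  A.sum fun a u => B.sum fun b v => Finsupp.single (wedgeElimP a b) (u * v)


section Aux
open Finsupp

variable {X₁ X₂ Y : Type*} [TopologicalSpace X₁] [TopologicalSpace X₂]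
    [TopologicalSpace Y] {p₁ : X₁} {p₂ : X₂} {y₀ : Y}

/-- Restriction of `a ∇ b` to `T` only depends on the restrictions of `a` and `b`
to the preimages of `T` minus the basepoints. -/
theorem restrict_wedgeElimP_congr (T : Set (Wedge X₁ X₂ p₁ p₂))
    (a a' : PtdMap X₁ Y p₁ y₀) (b b' : PtdMap X₂ Y p₂ y₀)
    (h1 : ∀ x, x ≠ p₁ → Quot.mk _ (Sum.inl x) ∈ T → a.1 x = a'.1 x)
    (h2 : ∀ y, y ≠ p₂ → Quot.mk _ (Sum.inr y) ∈ T → b.1 y = b'.1 y) :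
    (wedgeElimP a b).1.restrict T = (wedgeElimP a' b').1.restrict T := by
  classical
  ext ⟨t, ht⟩
  obtain ⟨s, rfl⟩ := Quot.exists_rep t
  rcases s with x | y
  · show a.1 x = a'.1 x
    by_cases hx : x = p₁
    · rw [hx, a.2, a'.2]
    · exact h1 x hx ht
  · show b.1 y = b'.1 y
    by_cases hy : y = p₂
    · rw [hy, b.2, b'.2]
    · exact h2 y hy ht

theorem key_restrict_join (T : Set (Wedge X₁ X₂ p₁ p₂)) (T₁ : Set X₁) (T₂ : Set X₂)
    (hT1 : ∀ x, x ≠ p₁ → Quot.mk _ (Sum.inl x) ∈ T → x ∈ T₁)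
    (hT2 : ∀ y, y ≠ p₂ → Quot.mk _ (Sum.inr y) ∈ T → y ∈ T₂)
    (A : PtdMap X₁ Y p₁ y₀ →₀ ℤ) (B : PtdMap X₂ Y p₂ y₀ →₀ ℤ)
    (h : restrictEnsP T₁ A = 0 ∨ restrictEnsP T₂ B = 0) :
    restrictEnsP T (joinEns A B) = 0 := by
  classical
  set rA : PtdMap X₁ Y p₁ y₀ → C(T₁, Y) := fun a => a.1.restrict T₁ with hrA
  set rB : PtdMap X₂ Y p₂ y₀ → C(T₂, Y) := fun b => b.1.restrict T₂ with hrB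
  -- a map assembling restrictions
  set φ : C(T₁, Y) → C(T₂, Y) → C(T, Y) := fun f g =>
    if h : ∃ a b, rA a = f ∧ rB b = g then
      (wedgeElimP h.choose h.choose_spec.choose).1.restrict T
    else ContinuousMap.const _ y₀ with hφ
  have hφ_spec : ∀ (a : PtdMap X₁ Y p₁ y₀) (b : PtdMap X₂ Y p₂ y₀),
      φ (rA a) (rB b) = (wedgeElimP a b).1.restrict T := by
    intro a b
    have hex : ∃ a' b', rA a' = rA a ∧ rB b' = rB b := ⟨a, b, rfl, rfl⟩
    rw [hφ]
    simp only [dif_pos hex]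
    obtain ⟨h1, h2⟩ := hex.choose_spec.choose_spec
    refine restrict_wedgeElimP_congr T _ _ _ _ ?_ ?_
    · intro x hx hxT
      have := congrFun (congrArg (fun f : C(T₁,Y) => (f : T₁ → Y)) h1) ⟨x, hT1 x hx hxT⟩
      exact this
    · intro y hy hyT
      have := congrFun (congrArg (fun f : C(T₂,Y) => (f : T₂ → Y)) h2) ⟨y, hT2 y hy hyT⟩
      exact this
  have expand : restrictEnsP T (joinEns A B)
      = A.sum fun a u => B.sum fun b v => Finsupp.single (φ (rA a) (rB b)) (u * v) := by
    rw [joinEns, map_finsuppSum]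
    refine Finsupp.sum_congr fun a _ => ?_
    rw [map_finsuppSum]
    refine Finsupp.sum_congr fun b _ => ?_
    rw [restrictEnsP, Finsupp.mapDomain.addMonoidHom_apply, Finsupp.mapDomain_single,
      hφ_spec]
  rw [expand]
  rcases h with h0 | h0
  · have : (A.sum fun a u => B.sum fun b v => Finsupp.single (φ (rA a) (rB b)) (u * v))
        = (Finsupp.mapDomain rA A).sum
            fun f u => B.sum fun b v => Finsupp.single (φ f (rB b)) (u * v) := by
      rw [Finsupp.sum_mapDomain_index]
      · intro f
        simp
      · intro f u₁ u₂
        rw [← Finsupp.sum_add]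
        refine Finsupp.sum_congr fun b _ => ?_
        rw [← Finsupp.single_add, add_mul]
    rw [this]
    have h0' : Finsupp.mapDomain rA A = 0 := h0
    rw [h0', Finsupp.sum_zero_index]
  · rw [Finsupp.sum]
    refine Finset.sum_eq_zero fun a _ => ?_
    have : (B.sum fun b v => Finsupp.single (φ (rA a) (rB b)) ((A a) * v))
        = (Finsupp.mapDomain rB B).sum
            fun g v => Finsupp.single (φ (rA a) g) ((A a) * v) := by
      rw [Finsupp.sum_mapDomain_index]
      · intro g
        simp
      · intro g v₁ v₂
        rw [← Finsupp.single_add, mul_add]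
    rw [this]
    have h0' : Finsupp.mapDomain rB B = 0 := h0
    rw [h0', Finsupp.sum_zero_index]

/-- A retraction used to show injectivity facts about the wedge. -/
def wedgeRetr [DecidableEq X₂] : Wedge X₁ X₂ p₁ p₂ → X₁ ⊕ X₂ :=
  Quot.lift
    (fun s => match s with
      | Sum.inl x => Sum.inl x
      | Sum.inr y => if y = p₂ then Sum.inl p₁ else Sum.inr y)
    (by rintro s t ⟨rfl, rfl⟩; simp)

theorem wedgeRetr_inl [DecidableEq X₂] (x : X₁) :
    wedgeRetr (Quot.mk _ (Sum.inl x) : Wedge X₁ X₂ p₁ p₂) = Sum.inl x := rfl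

theorem wedgeRetr_inr [DecidableEq X₂] (y : X₂) (hy : y ≠ p₂) :
    wedgeRetr (Quot.mk _ (Sum.inr y) : Wedge X₁ X₂ p₁ p₂) = Sum.inr y := by
  show (if y = p₂ then Sum.inl p₁ else Sum.inr y) = Sum.inr y
  rw [if_neg hy]

end Aux

theorem stmt2 {X₁ X₂ Y : Type*} [TopologicalSpace X₁] [TopologicalSpace X₂]
    [TopologicalSpace Y] (p₁ : X₁) (p₂ : X₂) (y₀ : Y) (p q : ℕ)
    (A : PtdMap X₁ Y p₁ y₀ →₀ ℤ) (B : PtdMap X₂ Y p₂ y₀ →₀ ℤ)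
    (hA : inFiltP p A) (hB : inFiltP q B) :
    inFiltP (p + q) (joinEns A B) := by
  intro T hT hTcard
  classical
  set T₁ : Set X₁ := {x | x ≠ p₁ ∧ Quot.mk _ (Sum.inl x) ∈ T} with hT₁
  set T₂ : Set X₂ := {y | y ≠ p₂ ∧ Quot.mk _ (Sum.inr y) ∈ T} with hT₂
  have hinj1 : Set.InjOn (fun x : X₁ => (Quot.mk _ (Sum.inl x) : Wedge X₁ X₂ p₁ p₂)) T₁ := by
    intro x _ x' _ h
    have := congrArg wedgeRetr h
    rw [wedgeRetr_inl, wedgeRetr_inl] at this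
    exact Sum.inl.inj this
  have hinj2 : Set.InjOn (fun y : X₂ => (Quot.mk _ (Sum.inr y) : Wedge X₁ X₂ p₁ p₂)) T₂ := by
    intro y hy y' hy' h
    have := congrArg wedgeRetr h
    rw [wedgeRetr_inr y hy.1, wedgeRetr_inr y' hy'.1] at this
    exact Sum.inr.inj this
  have hsub1 : (fun x : X₁ => (Quot.mk _ (Sum.inl x) : Wedge X₁ X₂ p₁ p₂)) '' T₁ ⊆ T := by
    rintro _ ⟨x, hx, rfl⟩; exact hx.2
  have hsub2 : (fun y : X₂ => (Quot.mk _ (Sum.inr y) : Wedge X₁ X₂ p₁ p₂)) '' T₂ ⊆ T := by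
    rintro _ ⟨y, hy, rfl⟩; exact hy.2
  have hdisj : Disjoint ((fun x : X₁ => (Quot.mk _ (Sum.inl x) : Wedge X₁ X₂ p₁ p₂)) '' T₁)
      ((fun y : X₂ => (Quot.mk _ (Sum.inr y) : Wedge X₁ X₂ p₁ p₂)) '' T₂) := by
    rw [Set.disjoint_left]
    rintro _ ⟨x, hx, rfl⟩ ⟨y, hy, h⟩
    have := congrArg wedgeRetr h
    rw [wedgeRetr_inr y hy.1, wedgeRetr_inl] at this
    cases this
  have hfin1 : T₁.Finite := (hT.subset hsub1).of_finite_image hinj1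
  have hfin2 : T₂.Finite := (hT.subset hsub2).of_finite_image hinj2
  have hcard : T₁.ncard + T₂.ncard ≤ T.ncard := by
    rw [← Set.ncard_image_of_injOn hinj1, ← Set.ncard_image_of_injOn hinj2,
      ← Set.ncard_union_eq hdisj (hT.subset hsub1) (hT.subset hsub2)]
    exact Set.ncard_le_ncard (Set.union_subset hsub1 hsub2) hT
  have hcase : T₁.ncard < p ∨ T₂.ncard < q := by omega
  refine key_restrict_join T T₁ T₂ (fun x hx hxT => ⟨hx, hxT⟩) (fun y hy hyT => ⟨hy, hyT⟩)
    A B ?_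
  rcases hcase with h | h
  · exact Or.inl (hA T₁ hfin1 h)
  · exact Or.inr (hB T₂ hfin2 h)
end

section
/- Let n ≥ 1 and s ≥ 1, and let w ∈ A = ℚ⟨T₁,…,T_n⟩ be an element whose coefficient at every word of length less than s is zero. Then for every word m, of length z, there exists a one-variable polynomial P with rational coefficients satisfying s·deg(P) ≤ z such that for every natural number x, the coefficient of (1+w)^x at the word m equals P(x). -/
open Finset Polynomial

lemma powZero {n s : ℕ} (w : MonoidAlgebra ℚ (FreeMonoid (Fin n)))
    (hw : ∀ m : FreeMonoid (Fin n), m.length < s → w.coeff m = 0) (k : ℕ) :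
    ∀ m : FreeMonoid (Fin n), m.length < s * k → (w ^ k).coeff m = 0 := by
  induction k with
  | zero => intro m hm; simp at hm
  | succ k ih =>
    intro m hm
    classical
    rw [pow_succ, MonoidAlgebra.mul_apply]
    simp only [Finsupp.sum]
    apply Finset.sum_eq_zero
    intro a _
    apply Finset.sum_eq_zero
    intro b _
    split_ifs with h
    · have hlen : a.length + b.length = m.length := by
        rw [← h, FreeMonoid.length_mul]
      rcases lt_or_ge a.length (s * k) with h1 | h1
      · rw [ih a h1, zero_mul]
      · have : b.length < s := by
          have := hm; rw [Nat.mul_succ] at this; omega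
        rw [hw b this, mul_zero]
    · rfl

/-- Lemma 6.2 (coefficient form): if `w` is an element of the free associative
`ℚ`-algebra `A = ℚ⟨T₁,…,T_n⟩` (the monoid algebra of the free monoid on `n` letters)
whose coefficient at every word of length `< s` vanishes, then for each word `m` of
length `z` there is a one-variable rational polynomial `P` with `s * deg P ≤ z` whose
values give the coefficients of `(1 + w) ^ x` at `m` for all natural `x`. -/
theorem stmt9 (n s : ℕ) (hn : 1 ≤ n) (hs : 1 ≤ s)
    (w : MonoidAlgebra ℚ (FreeMonoid (Fin n)))
    (hw : ∀ m : FreeMonoid (Fin n), m.length < s → w.coeff m = 0) :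
    ∀ m : FreeMonoid (Fin n), ∃ P : Polynomial ℚ,
      s * P.natDegree ≤ m.length ∧
        ∀ x : ℕ, ((1 + w) ^ x).coeff m = P.eval (x : ℚ) := by
  intro m
  set K := m.length / s with hK
  set P : Polynomial ℚ :=
    ∑ k ∈ range (K + 1), ((w ^ k).coeff m * (k.factorial : ℚ)⁻¹) • descPochhammer ℚ k with hP
  refine ⟨P, ?_, ?_⟩
  · have hdeg : P.natDegree ≤ K := by
      apply Polynomial.natDegree_sum_le_of_forall_le
      intro k hk
      calc (((w ^ k).coeff m * (k.factorial : ℚ)⁻¹) • descPochhammer ℚ k).natDegree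
          ≤ (descPochhammer ℚ k).natDegree := Polynomial.natDegree_smul_le _ _
        _ = k := descPochhammer_natDegree (R := ℚ) k
        _ ≤ K := by simpa using Nat.lt_succ_iff.mp (mem_range.mp hk)
    calc s * P.natDegree ≤ s * K := Nat.mul_le_mul_left _ hdeg
      _ ≤ m.length := by rw [hK, mul_comm]; exact Nat.div_mul_le_self _ _
  · intro x
    -- expand (1+w)^x
    have hexp : ((1 + w) ^ x).coeff m
        = ∑ k ∈ range (x + 1), (x.choose k : ℚ) * (w ^ k).coeff m := by
      rw [add_comm, (Commute.one_right w).add_pow]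
      rw [MonoidAlgebra.coeff_sum, Finsupp.finset_sum_apply]
      apply Finset.sum_congr rfl
      intro k _
      rw [one_pow, mul_one, ← (Nat.cast_commute (x.choose k) (w ^ k)).eq,
        ← nsmul_eq_mul, MonoidAlgebra.coeff_smul_apply, nsmul_eq_mul]
    -- common extended range
    have hcommon : ∀ (N : Finset ℕ), range (x + 1) ⊆ N → range (K + 1) ⊆ N →
        (∀ k ∈ N, k ∉ range (x+1) → (x.choose k : ℚ) * (w ^ k).coeff m = 0) →
        (∀ k ∈ N, k ∉ range (K+1) → (x.choose k : ℚ) * (w ^ k).coeff m = 0) →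
        ∑ k ∈ range (x + 1), (x.choose k : ℚ) * (w ^ k).coeff m
          = ∑ k ∈ range (K + 1), (x.choose k : ℚ) * (w ^ k).coeff m := by
      intro N h1 h2 h3 h4
      rw [Finset.sum_subset h1 h3, Finset.sum_subset h2 h4]
    have hzero1 : ∀ k, x < k → (x.choose k : ℚ) * (w ^ k).coeff m = 0 := by
      intro k hk; rw [Nat.choose_eq_zero_of_lt hk]; simp
    have hzero2 : ∀ k, K < k → (x.choose k : ℚ) * (w ^ k).coeff m = 0 := by
      intro k hk
      have hlen : m.length < s * k := by
        have h1 : m.length < s * (K + 1) := by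
          rw [mul_comm]
          exact (Nat.div_lt_iff_lt_mul (by omega)).mp (Nat.lt_succ_self K)
        calc m.length < s * (K + 1) := h1
          _ ≤ s * k := Nat.mul_le_mul_left _ hk
      rw [powZero w hw k m hlen, mul_zero]
    have hsum : ∑ k ∈ range (x + 1), (x.choose k : ℚ) * (w ^ k).coeff m
        = ∑ k ∈ range (K + 1), (x.choose k : ℚ) * (w ^ k).coeff m := by
      have hgen : ∀ a b : ℕ, a + 1 ≤ a + b + 2 := by intro a b; omega
      apply hcommon (range (x + K + 2))
      · exact Finset.range_subset_range.mpr (hgen x K)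
      · exact Finset.range_subset_range.mpr (by have := hgen K x; omega)
      · intro k _ hk; exact hzero1 k (by simpa using hk)
      · intro k _ hk; exact hzero2 k (by simpa using hk)
    rw [hexp, hsum, hP, Polynomial.eval_finset_sum]
    apply Finset.sum_congr rfl
    intro k _
    rw [Polynomial.eval_smul, smul_eq_mul, descPochhammer_eval_eq_descFactorial,
      Nat.descFactorial_eq_factorial_mul_choose]
    push_cast
    field_simp
end

section
/- Let G be a group, n ≥ 1, r ≥ 0, let I be a finite index set, u : I → ℤ, and z_i = (z_{i1},…,z_{in}) ∈ G^n for i ∈ I. Suppose that for every subset K ⊆ {1,…,n} with at most r elements and every function w : K → G, the sum of u_i over all i ∈ I such that z_{ik} = w(k) for all k ∈ K equals 0. Then the element Σ_{i∈I} u_i ⟨z_{i1}z_{i2}⋯z_{in}⟩ of the integral group ring ℤ[G] lies in I(G)^{r+1}, the (r+1)-st power of the augmentation ideal. -/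
open scoped Classical

/-- The augmentation homomorphism `ℤ[G] → ℤ`, `⟨g⟩ ↦ 1`. -/
noncomputable def augMap (G : Type*) [Group G] : MonoidAlgebra ℤ G →ₐ[ℤ] ℤ :=
  MonoidAlgebra.lift ℤ ℤ G 1

/-- The augmentation ideal `I(G) ⊆ ℤ[G]`, the kernel of the augmentation; being a
two-sided ideal, its powers (as `ℤ`-submodules of the ring `ℤ[G]`) coincide with its
powers as an ideal. -/
noncomputable def augIdeal (G : Type*) [Group G] : Submodule ℤ (MonoidAlgebra ℤ G) :=
  LinearMap.ker (augMap G).toLinearMap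

section Aux

/-- Swap a `Finset` sum with a list sum. -/
lemma aux_sum_list_swap {ι α M : Type*} [AddCommMonoid M] (t : Finset ι) (L : List α)
    (f : ι → α → M) :
    ∑ i ∈ t, ((L.map (f i)).sum) = (L.map fun a => ∑ i ∈ t, f i a).sum := by
  induction L with
  | nil => simp
  | cons a L ih => simp [Finset.sum_add_distrib, ih]

/-- Noncommutative expansion of `∏ (1 + f a)` over the sublists. -/
lemma aux_expand {R α : Type*} [Ring R] (l : List α) (f : α → R) :
    (l.map fun a => 1 + f a).prod = (l.sublists'.map fun s => (s.map f).prod).sum := by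
  induction l with
  | nil => simp
  | cons a l ih =>
      rw [List.map_cons, List.prod_cons, ih, List.sublists'_cons, List.map_append,
        List.sum_append, List.map_map]
      have h2 : (((fun s => (List.map f s).prod) ∘ List.cons a) =
          fun s => f a * (List.map f s).prod) := by
        funext s
        simp
      rw [h2, List.sum_map_mul_left, add_mul, one_mul]

lemma aux_neg_prod {R α : Type*} [Ring R] (l : List α) (f : α → R) :
    (l.map fun a => -f a).prod = ((-1 : ℤ) ^ l.length) • (l.map f).prod := by
  induction l with
  | nil => simp
  | cons a l ih =>
      rw [List.map_cons, List.prod_cons, ih, List.map_cons, List.prod_cons,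
        List.length_cons, ← neg_one_zsmul (f a), smul_mul_smul_comm, pow_succ']

lemma aug_delta_mem {G : Type*} [Group G] (g : G) :
    MonoidAlgebra.of ℤ G g - 1 ∈ augIdeal G := by
  simp [augIdeal, LinearMap.mem_ker, augMap, map_sub, MonoidAlgebra.lift_of]

lemma aug_mul_right_mem₀ {G : Type*} [Group G] {p : MonoidAlgebra ℤ G}
    (hp : p ∈ augIdeal G) (q : MonoidAlgebra ℤ G) : p * q ∈ augIdeal G := by
  simp only [augIdeal, LinearMap.mem_ker, AlgHom.toLinearMap_apply, map_mul] at *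
  rw [hp, zero_mul]

lemma aug_mul_right_mem {G : Type*} [Group G] :
    ∀ (k : ℕ) (p : MonoidAlgebra ℤ G), p ∈ augIdeal G ^ (k + 1) →
      ∀ q, p * q ∈ augIdeal G ^ (k + 1) := by
  intro k
  induction k with
  | zero =>
      intro p hp q
      rw [pow_one] at *
      exact aug_mul_right_mem₀ hp q
  | succ k ih =>
      intro p hp q
      rw [pow_succ] at hp ⊢
      refine Submodule.mul_induction_on hp (fun a ha b hb => ?_)
        (fun x y hx hy => by rw [add_mul]; exact add_mem hx hy)
      rw [mul_assoc]
      exact Submodule.mul_mem_mul ha (aug_mul_right_mem₀ hb q)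

lemma aux_prod_mem_pow {G : Type*} [Group G] :
    ∀ (L : List (MonoidAlgebra ℤ G)), (∀ x ∈ L, x ∈ augIdeal G) →
      L.prod ∈ augIdeal G ^ L.length := by
  intro L
  induction L with
  | nil => intro _; rw [List.prod_nil, List.length_nil, pow_zero]
           exact Submodule.one_le.mp le_rfl
  | cons a L ih =>
      intro h
      rw [List.prod_cons, List.length_cons, pow_succ']
      exact Submodule.mul_mem_mul (h a (by simp)) (ih fun x hx => h x (by simp [hx]))

end Aux

section Main

variable {G : Type*} [Group G] {n r : ℕ} {I : Type*} [Fintype I]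

/-- Lemma D: for any short list `t`, the sum `Σᵢ uᵢ ⟨∏_{k∈t} z_{ik}⟩` vanishes. -/
lemma aux_D (u : I → ℤ) (z : I → Fin n → G)
    (hK : ∀ K : Finset (Fin n), K.card ≤ r → ∀ w : Fin n → G,
      (∑ i : I, if ∀ k ∈ K, z i k = w k then u i else 0) = 0)
    (t : List (Fin n)) (ht : t.length ≤ r) :
    ∑ i : I, u i • MonoidAlgebra.of ℤ G ((t.map (z i)).prod) = 0 := by
  classical
  set K : Finset (Fin n) := t.toFinset with hKdef
  have hcard : K.card ≤ r := le_trans (List.toFinset_card_le t) ht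
  set f : I → (Fin n → G) := fun i k => if k ∈ K then z i k else 1 with hf
  have hmap : ∀ i, t.map (z i) = t.map (f i) := by
    intro i
    refine List.map_congr_left fun k hk => ?_
    simp [hf, hKdef, hk]
  have key := Finset.sum_fiberwise_of_maps_to (s := (Finset.univ : Finset I))
    (t := Finset.univ.image f)
    (fun i _ => Finset.mem_image_of_mem f (Finset.mem_univ i))
    (fun i => u i • MonoidAlgebra.of ℤ G ((t.map (f i)).prod))
  calc ∑ i : I, u i • MonoidAlgebra.of ℤ G ((t.map (z i)).prod)
      = ∑ i : I, u i • MonoidAlgebra.of ℤ G ((t.map (f i)).prod) :=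
        Finset.sum_congr rfl fun i _ => by rw [hmap i]
    _ = ∑ w ∈ Finset.univ.image f, ∑ i ∈ Finset.univ.filter (fun i => f i = w),
          u i • MonoidAlgebra.of ℤ G ((t.map (f i)).prod) := key.symm
    _ = 0 := by
        refine Finset.sum_eq_zero fun w hw => ?_
        obtain ⟨j, -, hj⟩ := Finset.mem_image.mp hw
        have h1 : ∑ i ∈ Finset.univ.filter (fun i => f i = w),
            u i • MonoidAlgebra.of ℤ G ((t.map (f i)).prod)
            = (∑ i ∈ Finset.univ.filter (fun i => f i = w), u i) •
                MonoidAlgebra.of ℤ G ((t.map w).prod) := by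
          rw [Finset.sum_smul]
          refine Finset.sum_congr rfl fun i hi => ?_
          rw [(Finset.mem_filter.mp hi).2]
        have h2 : (∑ i ∈ Finset.univ.filter (fun i => f i = w), u i) = 0 := by
          rw [Finset.sum_filter]
          rw [show (∑ i : I, if f i = w then u i else 0)
              = ∑ i : I, if ∀ k ∈ K, z i k = w k then u i else 0 from
            Finset.sum_congr rfl fun i _ => if_congr (by
              constructor
              · intro h k hk
                have h' := congrFun h k
                simp only [hf, if_pos hk] at h'
                exact h'
              · intro h
                funext k
                by_cases hk : k ∈ K
                · rw [hf]; simp only [if_pos hk]; exact h k hk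
                · rw [hf, ← hj, hf]; simp only [if_neg hk]) rfl rfl]
          exact hK K hcard w
        rw [h1, h2, zero_smul]

/-- Lemma E: for any short list `s`, `Σᵢ uᵢ ∏_{k∈s} (⟨z_{ik}⟩ - 1)` vanishes. -/
lemma aux_E (u : I → ℤ) (z : I → Fin n → G)
    (hK : ∀ K : Finset (Fin n), K.card ≤ r → ∀ w : Fin n → G,
      (∑ i : I, if ∀ k ∈ K, z i k = w k then u i else 0) = 0)
    (s : List (Fin n)) (hs : s.length ≤ r) :
    ∑ i : I, u i • ((s.map fun k => MonoidAlgebra.of ℤ G (z i k) - 1).prod) = 0 := by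
  have per_i : ∀ i : I, ((s.map fun k => MonoidAlgebra.of ℤ G (z i k) - 1).prod)
      = (s.sublists'.map fun tt => ((-1 : ℤ) ^ (s.length + tt.length)) •
          MonoidAlgebra.of ℤ G ((tt.map (z i)).prod)).sum := by
    intro i
    have h1 : (s.map fun k => MonoidAlgebra.of ℤ G (z i k) - 1)
        = s.map fun k => -(1 + -(MonoidAlgebra.of ℤ G (z i k))) := by
      refine List.map_congr_left fun k _ => by abel
    rw [h1, aux_neg_prod, aux_expand, List.smul_sum, List.map_map]
    congr 1
    refine List.map_congr_left fun tt _ => ?_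
    simp only [Function.comp_apply]
    rw [aux_neg_prod, smul_smul, ← pow_add,
      map_list_prod (MonoidAlgebra.of ℤ G), List.map_map]
    rfl
  simp only [per_i]
  simp_rw [List.smul_sum, List.map_map]
  rw [aux_sum_list_swap]
  refine List.sum_eq_zero fun x hx => ?_
  obtain ⟨tt, htt, rfl⟩ := List.mem_map.mp hx
  have hlen : tt.length ≤ r :=
    le_trans (List.Sublist.length_le (List.mem_sublists'.mp htt)) hs
  calc (∑ i : I, ((u i • ·) ∘ fun tt => ((-1 : ℤ) ^ (s.length + tt.length)) •
          MonoidAlgebra.of ℤ G ((tt.map (z i)).prod)) tt)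
      = ((-1 : ℤ) ^ (s.length + tt.length)) •
          ∑ i : I, u i • MonoidAlgebra.of ℤ G ((tt.map (z i)).prod) := by
        rw [Finset.smul_sum]
        exact Finset.sum_congr rfl fun i _ => smul_comm _ _ _
    _ = 0 := by rw [aux_D u z hK tt hlen, smul_zero]

end Main

/-- Lemma 12.1: if `Z = Σ_i u_i ⟨z_i⟩`, `z_i ∈ G^n`, satisfies `⟨ω_K⟩(Z) = 0` for all
`K ⊆ {1,…,n}` with `|K| ≤ r` (i.e. for every such `K` and every assignment `w` the sum
of the `u_i` with `z_{ik} = w k` for `k ∈ K` vanishes), then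
`⟨M⟩(Z) = Σ_i u_i ⟨z_{i1} ⋯ z_{in}⟩ ∈ I(G)^{r+1}`. -/
theorem stmt16 {G : Type*} [Group G] (n r : ℕ) (hn : 1 ≤ n)
    {I : Type*} [Fintype I] (u : I → ℤ) (z : I → Fin n → G)
    (hK : ∀ K : Finset (Fin n), K.card ≤ r → ∀ w : Fin n → G,
      (∑ i : I, if ∀ k ∈ K, z i k = w k then u i else 0) = 0) :
    (∑ i : I, u i •
        MonoidAlgebra.of ℤ G (((List.finRange n).map fun k => z i k).prod)) ∈
      augIdeal G ^ (r + 1) := by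
  have per_i : ∀ i : I, MonoidAlgebra.of ℤ G (((List.finRange n).map fun k => z i k).prod)
      = ((List.finRange n).sublists'.map fun s =>
          ((s.map fun k => MonoidAlgebra.of ℤ G (z i k) - 1).prod)).sum := by
    intro i
    rw [map_list_prod (MonoidAlgebra.of ℤ G), List.map_map]
    have h1 : ((List.finRange n).map (⇑(MonoidAlgebra.of ℤ G) ∘ fun k => z i k))
        = (List.finRange n).map fun k => 1 + (MonoidAlgebra.of ℤ G (z i k) - 1) := by
      refine List.map_congr_left fun k _ => by simp
    rw [h1, aux_expand]
  simp only [per_i]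
  simp_rw [List.smul_sum, List.map_map]
  rw [aux_sum_list_swap]
  refine list_sum_mem fun x hx => ?_
  obtain ⟨s, hsmem, rfl⟩ := List.mem_map.mp hx
  by_cases hlen : s.length ≤ r
  · have h0 := aux_E u z hK s hlen
    have : (∑ i : I, ((u i • ·) ∘ fun s =>
        ((s.map fun k => MonoidAlgebra.of ℤ G (z i k) - 1).prod)) s) = 0 := h0
    rw [this]
    exact zero_mem _
  · push_neg at hlen
    refine Submodule.sum_mem _ fun i _ => ?_
    refine Submodule.smul_mem _ _ ?_
    simp only [Function.comp_apply]
    have hsplit : (s.map fun k => MonoidAlgebra.of ℤ G (z i k) - 1)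
        = ((s.take (r + 1)).map fun k => MonoidAlgebra.of ℤ G (z i k) - 1)
          ++ ((s.drop (r + 1)).map fun k => MonoidAlgebra.of ℤ G (z i k) - 1) := by
      rw [← List.map_append, List.take_append_drop]
    rw [hsplit, List.prod_append]
    have h1 : ((s.take (r + 1)).map fun k => MonoidAlgebra.of ℤ G (z i k) - 1).prod
        ∈ augIdeal G ^ (r + 1) := by
      have := aux_prod_mem_pow ((s.take (r + 1)).map fun k =>
        MonoidAlgebra.of ℤ G (z i k) - 1) (by
          intro x hx
          obtain ⟨k, -, rfl⟩ := List.mem_map.mp hx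
          exact aug_delta_mem _)
      rwa [List.length_map, List.length_take, min_eq_left (by omega)] at this
    exact aug_mul_right_mem r _ h1 _
end
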